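/- arXiv:0808.3189 — 10 statements merged into one kernel-verified Lean document; each statement's English description precedes it below -/
import Mathlib

section
/- For a commutative ring R with identity, if I is an annihilating-ideal of R (i.e., Ann(I) ≠ (0)) and N is a nonzero nilpotent ideal of R, then N + I is an annihilating-ideal of R. -/
/-- If `I` is an annihilating-ideal of a commutative ring `R` and `N` is a nonzero
nilpotent ideal of `R`, then `N + I` is an annihilating-ideal of `R`. -/
theorem annihilating_add_nilpotent {R : Type*} [CommRing R] (I N : Ideal R)
    (hI : Submodule.annihilator I ≠ ⊥) (hN : N ≠ ⊥) (hnil : IsNilpotent N) :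
    Submodule.annihilator (N + I) ≠ ⊥ := by
  obtain ⟨a, haI, ha0⟩ := Submodule.ne_bot_iff _ |>.mp hI
  obtain ⟨n, hn⟩ := hnil
  -- the chain N^k * (a)
  have hbot : N ^ n * Ideal.span {a} = ⊥ := by
    rw [hn]; simp
  have hex : ∃ k, N ^ k * Ideal.span {a} = ⊥ := ⟨n, hbot⟩
  classical
  set k := Nat.find hex with hk
  have hkbot : N ^ k * Ideal.span {a} = ⊥ := Nat.find_spec hex
  have hkpos : k ≠ 0 := by
    intro h0
    have : Ideal.span {a} = ⊥ := by
      have := hkbot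
      rw [h0, pow_zero, one_mul] at this
      exact this
    exact ha0 (by simpa [Ideal.span_eq_bot] using this)
  have hprev : N ^ (k - 1) * Ideal.span {a} ≠ ⊥ :=
    Nat.find_min hex (Nat.sub_lt (Nat.pos_of_ne_zero hkpos) one_pos)
  obtain ⟨x, hx, hx0⟩ := Submodule.ne_bot_iff _ |>.mp hprev
  rw [Submodule.ne_bot_iff]
  refine ⟨x, ?_, hx0⟩
  rw [Submodule.mem_annihilator]
  intro m hm
  rw [Submodule.add_eq_sup, Submodule.mem_sup] at hm
  obtain ⟨y, hy, z, hz, rfl⟩ := hm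
  have hxy : x * y = 0 := by
    have h1 : x * y ∈ N ^ (k - 1) * Ideal.span {a} * N := Ideal.mul_mem_mul hx hy
    have h2 : N ^ (k - 1) * Ideal.span {a} * N = N ^ k * Ideal.span {a} := by
      conv_rhs => rw [← Nat.succ_pred_eq_of_pos (Nat.pos_of_ne_zero hkpos)]
      rw [pow_succ]; exact mul_right_comm _ _ _
    rw [h2, hkbot] at h1
    simpa using h1
  have hxz : x * z = 0 := by
    have hxa : x ∈ Ideal.span {a} := Ideal.mul_le_right (I := N ^ (k - 1)) (J := Ideal.span {a}) hx
    obtain ⟨r, rfl⟩ := Ideal.mem_span_singleton'.mp hxa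
    have := Submodule.mem_annihilator.mp haI z hz
    simp only [smul_eq_mul] at this
    rw [mul_assoc, mul_comm a z, mul_comm z a, this, mul_zero]
  simp only [smul_eq_mul]
  rw [mul_add, hxy, hxz, add_zero]
end

section
/- Let R be a non-reduced commutative ring with identity. If there exist annihilating-ideals I and J of R such that Ann(I + J) = (0), then there exist distinct nonzero annihilating-ideals A and B of R with AB ≠ (0) and such that there is no nonzero ideal C with CA = CB = (0); in particular the annihilating-ideal graph of R has diameter 3. -/
private lemma exists_sq_zero' {R : Type*} [CommRing R] (hred : ¬ IsReduced R) :
    ∃ y : R, y ≠ 0 ∧ y * y = 0 := by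
  rw [isReduced_iff] at hred
  push_neg at hred
  obtain ⟨x, ⟨n, hn⟩, hx0⟩ := hred
  induction n using Nat.strong_induction_on generalizing x with
  | _ n ih =>
    match n, hn with
    | 0, hn =>
      simp only [pow_zero] at hn
      exact absurd (by rw [← mul_one x, hn, mul_zero]) hx0
    | 1, hn =>
      simp only [pow_one] at hn
      exact absurd hn hx0
    | (m+2), hn =>
      by_cases h : x ^ (m+1) = 0
      · exact ih (m+1) (by omega) x hx0 h
      · refine ⟨x ^ (m+1), h, ?_⟩
        rw [← pow_add, show m + 1 + (m + 1) = (m + 2) + m by omega, pow_add, hn, zero_mul]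

private lemma mul_eq_bot_iff' {R : Type*} [CommRing R] (C A : Ideal R) :
    C * A = ⊥ ↔ ∀ c ∈ C, ∀ a ∈ A, c * a = 0 := by
  rw [eq_bot_iff, Ideal.mul_le]
  simp [Submodule.mem_bot]

private lemma mem_ann_iff' {R : Type*} [CommRing R] (A : Ideal R) (x : R) :
    x ∈ Submodule.annihilator A ↔ ∀ a ∈ A, x * a = 0 := by
  rw [Submodule.mem_annihilator]
  simp [smul_eq_mul]

private lemma one_side' {R : Type*} [CommRing R] (P Q : Ideal R) (y : R)
    (hy0 : y ≠ 0) (hy2 : y * y = 0) (hPQ : P * Q = ⊥) (hQ : Q ≠ ⊥)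
    (hann : Submodule.annihilator (P ⊔ Q) = ⊥)
    (p : R) (hp : p ∈ P) (hyp : y * p ≠ 0) :
    ∃ A B : Ideal R, A ≠ ⊥ ∧ B ≠ ⊥ ∧ A ≠ B ∧
      Submodule.annihilator A ≠ ⊥ ∧ Submodule.annihilator B ≠ ⊥ ∧
      A * B ≠ ⊥ ∧ ¬ ∃ C : Ideal R, C ≠ ⊥ ∧ C * A = ⊥ ∧ C * B = ⊥ := by
  have hker : ∀ a ∈ P, ∀ b ∈ Q, a * b = 0 := (mul_eq_bot_iff' P Q).mp hPQ
  set B : Ideal R := Q ⊔ Ideal.span {y} with hB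
  have hyB : y ∈ B := Submodule.mem_sup_right (Ideal.mem_span_singleton_self y)
  have hQAnnP : Q ≤ Submodule.annihilator P := by
    intro q hq
    rw [mem_ann_iff']
    intro a ha
    rw [mul_comm]
    exact hker a ha q hq
  refine ⟨P, B, ?_, ?_, ?_, ?_, ?_, ?_, ?_⟩
  · intro h0
    apply hyp
    rw [h0, Submodule.mem_bot] at hp
    rw [hp, mul_zero]
  · intro h0
    rw [h0, Submodule.mem_bot] at hyB
    exact hy0 hyB
  · intro h0
    have hQP : Q ≤ P := h0 ▸ le_sup_left
    have : P ⊔ Q = P := sup_eq_left.mpr hQP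
    rw [this] at hann
    exact hQ (le_bot_iff.mp (hann ▸ hQAnnP))
  · intro h0
    exact hQ (le_bot_iff.mp (h0 ▸ hQAnnP))
  · intro h0
    apply hyp
    have : y * p ∈ Submodule.annihilator B := by
      rw [mem_ann_iff']
      intro b hb
      obtain ⟨q, hq, s, hs, rfl⟩ := Submodule.mem_sup.mp hb
      obtain ⟨r, rfl⟩ := Ideal.mem_span_singleton'.mp hs |>.imp (fun r hr => hr.symm)
      have h1 : p * q = 0 := hker p hp q hq
      calc y * p * (q + r * y) = y * (p * q) + (y * y) * (r * p) := by ring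
        _ = 0 := by rw [h1, hy2, mul_zero, zero_mul, add_zero]
    rw [h0, Submodule.mem_bot] at this
    exact this
  · intro h0
    exact hyp (by rw [mul_comm]; exact (mul_eq_bot_iff' P B).mp h0 p hp y hyB)
  · rintro ⟨C, hC0, hCA, hCB⟩
    obtain ⟨c, hc, hc0⟩ := Submodule.exists_mem_ne_zero_of_ne_bot hC0
    apply hc0
    have : c ∈ Submodule.annihilator (P ⊔ Q) := by
      rw [mem_ann_iff']
      intro a ha
      obtain ⟨u, hu, v, hv, rfl⟩ := Submodule.mem_sup.mp ha
      have h1 : c * u = 0 := (mul_eq_bot_iff' C P).mp hCA c hc u hu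
      have h2 : c * v = 0 := (mul_eq_bot_iff' C B).mp hCB c hc v (Submodule.mem_sup_left hv)
      rw [mul_add, h1, h2, add_zero]
    rw [hann, Submodule.mem_bot] at this
    exact this

/-- If `R` is non-reduced and there are annihilating-ideals `I`, `J` with
`Ann(I + J) = 0`, then there are distinct nonzero annihilating-ideals `A`, `B`
with `A * B ≠ 0` and no nonzero ideal annihilating both, i.e. `diam(AG(R)) = 3`. -/
theorem diam_three_of_nonreduced {R : Type*} [CommRing R] (hred : ¬ IsReduced R)
    (h : ∃ I J : Ideal R, Submodule.annihilator I ≠ ⊥ ∧ Submodule.annihilator J ≠ ⊥ ∧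
      Submodule.annihilator (I + J) = ⊥) :
    ∃ A B : Ideal R, A ≠ ⊥ ∧ B ≠ ⊥ ∧ A ≠ B ∧
      Submodule.annihilator A ≠ ⊥ ∧ Submodule.annihilator B ≠ ⊥ ∧
      A * B ≠ ⊥ ∧ ¬ ∃ C : Ideal R, C ≠ ⊥ ∧ C * A = ⊥ ∧ C * B = ⊥ := by
  obtain ⟨I, J, hI, hJ, hIJ⟩ := h
  rw [Submodule.add_eq_sup] at hIJ
  have hIbot : I ≠ ⊥ := by
    intro h0; rw [h0, bot_sup_eq] at hIJ; exact hJ hIJ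
  have hJbot : J ≠ ⊥ := by
    intro h0; rw [h0, sup_bot_eq] at hIJ; exact hI hIJ
  by_cases hmul : I * J = ⊥
  · obtain ⟨y, hy0, hy2⟩ := exists_sq_zero' hred
    by_cases hyP : ∃ p ∈ I, y * p ≠ 0
    · obtain ⟨p, hp, hyp⟩ := hyP
      exact one_side' I J y hy0 hy2 hmul hJbot hIJ p hp hyp
    · push_neg at hyP
      have hyQ : ∃ q ∈ J, y * q ≠ 0 := by
        by_contra hq
        push_neg at hq
        apply hy0
        have hy : y ∈ Submodule.annihilator (I ⊔ J) := by
          rw [mem_ann_iff']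
          intro a ha
          obtain ⟨u, hu, v, hv, rfl⟩ := Submodule.mem_sup.mp ha
          rw [mul_add, hyP u hu, hq v hv, add_zero]
        rw [hIJ, Submodule.mem_bot] at hy
        exact hy
      obtain ⟨q, hq, hyq⟩ := hyQ
      exact one_side' J I y hy0 hy2 (by rwa [mul_comm]) hIbot (by rwa [sup_comm]) q hq hyq
  · refine ⟨I, J, hIbot, hJbot, ?_, hI, hJ, hmul, ?_⟩
    · intro h0
      rw [h0, sup_idem] at hIJ
      exact hJ hIJ
    · rintro ⟨C, hC0, hCA, hCB⟩
      obtain ⟨c, hc, hc0⟩ := Submodule.exists_mem_ne_zero_of_ne_bot hC0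
      apply hc0
      have hy : c ∈ Submodule.annihilator (I ⊔ J) := by
        rw [mem_ann_iff']
        intro a ha
        obtain ⟨u, hu, v, hv, rfl⟩ := Submodule.mem_sup.mp ha
        rw [mul_add, (mul_eq_bot_iff' C I).mp hCA c hc u hu,
          (mul_eq_bot_iff' C J).mp hCB c hc v hv, add_zero]
      rw [hIJ, Submodule.mem_bot] at hy
      exact hy
end

section
/- Let R be a commutative reduced ring with exactly two minimal prime ideals P1 and P2. Then P1 ∩ P2 = (0), and for any two distinct nonzero annihilating-ideals I and J of R, there is a path of length at most 2 between I and J in the annihilating-ideal graph of R. -/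
/-- If `R` is reduced with exactly two minimal primes `P₁`, `P₂`, then
`P₁ ∩ P₂ = 0` and any two distinct nonzero annihilating-ideals are at
distance at most `2` in `AG(R)`. -/
theorem reduced_two_minimal_primes_diam_le_two {R : Type*} [CommRing R] [IsReduced R]
    (P₁ P₂ : Ideal R) (hne : P₁ ≠ P₂) (hmin : minimalPrimes R = {P₁, P₂}) :
    P₁ ⊓ P₂ = ⊥ ∧
      ∀ I J : Ideal R, I ≠ ⊥ → J ≠ ⊥ → Submodule.annihilator I ≠ ⊥ →
        Submodule.annihilator J ≠ ⊥ → I ≠ J →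
        (I * J = ⊥ ∨ ∃ K : Ideal R, K ≠ ⊥ ∧ I * K = ⊥ ∧ J * K = ⊥) := by
  have h1 : P₁ ∈ minimalPrimes R := by rw [hmin]; left; rfl
  have h2 : P₂ ∈ minimalPrimes R := by rw [hmin]; right; rfl
  have hp1 : P₁.IsPrime := h1.1.1
  have hp2 : P₂.IsPrime := h2.1.1
  have hinf : P₁ ⊓ P₂ = ⊥ := by
    have hs : sInf (minimalPrimes R) = (⊥ : Ideal R) := by
      rw [minimalPrimes, Ideal.sInf_minimalPrimes]
      simpa [nilradical] using nilradical_eq_zero R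
    rw [hmin, sInf_pair] at hs
    exact hs
  have hP1ne : P₁ ≠ ⊥ := by
    intro hbot
    apply hne
    have : P₂ ≤ ⊥ := h2.2 ⟨hbot ▸ hp1, le_refl _⟩ bot_le
    rw [hbot, le_bot_iff.mp this]
  have hP2ne : P₂ ≠ ⊥ := by
    intro hbot
    apply hne
    have : P₁ ≤ ⊥ := h1.2 ⟨hbot ▸ hp2, le_refl _⟩ bot_le
    rw [hbot, le_bot_iff.mp this]
  have hmul12 : P₁ * P₂ = ⊥ := le_bot_iff.mp (hinf ▸ Ideal.mul_le_inf)
  have key : ∀ I : Ideal R, Submodule.annihilator I ≠ ⊥ → I ≤ P₁ ∨ I ≤ P₂ := by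
    intro I hI
    obtain ⟨a, haI, ha0⟩ := Submodule.exists_mem_ne_zero_of_ne_bot hI
    have haan : ∀ x ∈ I, a * x = 0 := fun x hx => Submodule.mem_annihilator.mp haI x hx
    have hnmem : a ∉ P₁ ∨ a ∉ P₂ := by
      by_contra h
      push_neg at h
      have : a ∈ P₁ ⊓ P₂ := ⟨h.1, h.2⟩
      rw [hinf] at this
      exact ha0 (by simpa using this)
    rcases hnmem with hn | hn
    · left
      intro x hx
      have : a * x ∈ P₁ := by rw [haan x hx]; exact P₁.zero_mem
      exact (hp1.mem_or_mem this).resolve_left hn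
    · right
      intro x hx
      have : a * x ∈ P₂ := by rw [haan x hx]; exact P₂.zero_mem
      exact (hp2.mem_or_mem this).resolve_left hn
  refine ⟨hinf, fun I J hIne hJne hAI hAJ hIJ => ?_⟩
  rcases key I hAI with hI | hI <;> rcases key J hAJ with hJ | hJ
  · exact Or.inr ⟨P₂, hP2ne, le_bot_iff.mp (hmul12 ▸ Ideal.mul_mono hI le_rfl),
      le_bot_iff.mp (hmul12 ▸ Ideal.mul_mono hJ le_rfl)⟩
  · exact Or.inl (le_bot_iff.mp (hmul12 ▸ Ideal.mul_mono hI hJ))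
  · refine Or.inl (le_bot_iff.mp ?_)
    rw [mul_comm]
    exact hmul12 ▸ Ideal.mul_mono hJ hI
  · refine Or.inr ⟨P₁, hP1ne, le_bot_iff.mp ?_, le_bot_iff.mp ?_⟩ <;> rw [mul_comm]
    · exact hmul12 ▸ Ideal.mul_mono le_rfl hI
    · exact hmul12 ▸ Ideal.mul_mono le_rfl hJ
end

section
/- Let R be a commutative ring such that the zero-divisor graph Γ(R) has diameter 3, i.e., there exist zero-divisors a, b with no path of length ≤ 2 between them. Then the annihilating-ideal graph AG(R) also has diameter 3: there exist distinct nonzero annihilating-ideals I, J with IJ ≠ (0) and no nonzero ideal K with KI = KJ = (0). -/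
/-- If the zero-divisor graph `Γ(R)` has diameter `3` (witnessed by zero-divisors
`a`, `b` with no path of length `≤ 2` between them), then the annihilating-ideal
graph `AG(R)` also has diameter `3`. -/
theorem AG_diam_three_of_Gamma_diam_three {R : Type*} [CommRing R]
    (h : ∃ a b : R, a ≠ 0 ∧ b ≠ 0 ∧ a ≠ b ∧
      (∃ s : R, s ≠ 0 ∧ a * s = 0) ∧ (∃ s : R, s ≠ 0 ∧ b * s = 0) ∧
      a * b ≠ 0 ∧ ¬ ∃ c : R, c ≠ 0 ∧ c * a = 0 ∧ c * b = 0) :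
    ∃ I J : Ideal R, I ≠ ⊥ ∧ J ≠ ⊥ ∧
      Submodule.annihilator I ≠ ⊥ ∧ Submodule.annihilator J ≠ ⊥ ∧ I ≠ J ∧
      I * J ≠ ⊥ ∧ ¬ ∃ K : Ideal R, K ≠ ⊥ ∧ K * I = ⊥ ∧ K * J = ⊥ := by
  obtain ⟨a, b, ha, hb, hab, ⟨s, hs, hsa⟩, ⟨t, ht, htb⟩, hmul, hno⟩ := h
  refine ⟨Ideal.span {a}, Ideal.span {b}, ?_, ?_, ?_, ?_, ?_, ?_, ?_⟩
  · simpa [Ideal.span_singleton_eq_bot] using ha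
  · simpa [Ideal.span_singleton_eq_bot] using hb
  · intro hann
    have hmem : s ∈ Submodule.annihilator (Ideal.span ({a} : Set R)) := by
      rw [Submodule.mem_annihilator]
      rintro n hn
      rw [Ideal.mem_span_singleton] at hn
      obtain ⟨r, rfl⟩ := hn
      simp only [smul_eq_mul]
      calc s * (a * r) = (a * s) * r := by ring
        _ = 0 := by rw [hsa, zero_mul]
    rw [hann, Submodule.mem_bot] at hmem
    exact hs hmem
  · intro hann
    have hmem : t ∈ Submodule.annihilator (Ideal.span ({b} : Set R)) := by
      rw [Submodule.mem_annihilator]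
      rintro n hn
      rw [Ideal.mem_span_singleton] at hn
      obtain ⟨r, rfl⟩ := hn
      simp only [smul_eq_mul]
      calc t * (b * r) = (b * t) * r := by ring
        _ = 0 := by rw [htb, zero_mul]
    rw [hann, Submodule.mem_bot] at hmem
    exact ht hmem
  · intro heq
    have hbmem : b ∈ Ideal.span ({a} : Set R) := by
      rw [heq]; exact Ideal.mem_span_singleton_self b
    rw [Ideal.mem_span_singleton] at hbmem
    obtain ⟨r, hr⟩ := hbmem
    exact hno ⟨s, hs, by rw [mul_comm]; exact hsa,
      by rw [hr]; calc s * (a * r) = (a * s) * r := by ring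
        _ = 0 := by rw [hsa, zero_mul]⟩
  · rw [Ideal.span_singleton_mul_span_singleton, Ne, Ideal.span_singleton_eq_bot]
    exact hmul
  · rintro ⟨K, hK, hKa, hKb⟩
    obtain ⟨c, hcK, hc⟩ := Submodule.exists_mem_ne_zero_of_ne_bot hK
    refine hno ⟨c, hc, ?_, ?_⟩
    · have : c * a ∈ K * Ideal.span {a} :=
        Ideal.mul_mem_mul hcK (Ideal.mem_span_singleton_self a)
      rw [hKa, Ideal.mem_bot] at this
      exact this
    · have : c * b ∈ K * Ideal.span {b} :=
        Ideal.mul_mem_mul hcK (Ideal.mem_span_singleton_self b)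
      rw [hKb, Ideal.mem_bot] at this
      exact this
end

section
/- Let R be a commutative reduced ring such that the annihilating-ideal graph AG(R) is bipartite (2-colorable with at least one edge). Then R has exactly two minimal prime ideals; more precisely, there exist two distinct prime ideals P1, P2 of R with P1 ∩ P2 = (0). -/
/-- The annihilating-ideal graph of a commutative ring `R`. -/
def annihilatingIdealGraph (R : Type*) [CommRing R] :
    SimpleGraph {I : Ideal R // I ≠ ⊥ ∧ Submodule.annihilator I ≠ ⊥} where
  Adj I J := I ≠ J ∧ (I : Ideal R) * (J : Ideal R) = ⊥
  symm := ⟨fun I J h => ⟨h.1.symm, by rw [mul_comm]; exact h.2⟩⟩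
  loopless := ⟨fun I h => h.1 rfl⟩

section Aux

variable {R : Type*} [CommRing R]

lemma AG_sq_eq_bot [IsReduced R] {I : Ideal R} (h : I * I = ⊥) : I = ⊥ := by
  rw [eq_bot_iff]
  intro x hx
  have hx2 : x * x ∈ (⊥ : Ideal R) := h ▸ Ideal.mul_mem_mul hx hx
  rw [Ideal.mem_bot] at hx2 ⊢
  exact IsNilpotent.eq_zero ⟨2, by rwa [pow_two]⟩

lemma AG_le_ann {I J : Ideal R} (h : I * J = ⊥) : I ≤ Submodule.annihilator J := by
  intro x hx
  rw [Submodule.mem_annihilator]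
  intro n hn
  have : x * n ∈ (⊥ : Ideal R) := h ▸ Ideal.mul_mem_mul hx hn
  rwa [Ideal.mem_bot] at this

lemma AG_ann_mul_bot (K : Ideal R) : Submodule.annihilator K * K = ⊥ := by
  rw [eq_bot_iff, Ideal.mul_le]
  intro a ha b hb
  have := Submodule.mem_annihilator.mp ha b hb
  rw [smul_eq_mul] at this
  rw [Ideal.mem_bot]
  exact this

lemma AG_self_le_ann_ann (K : Ideal R) :
    K ≤ Submodule.annihilator (Submodule.annihilator K) := by
  intro x hx
  rw [Submodule.mem_annihilator]
  intro n hn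
  have := Submodule.mem_annihilator.mp hn x hx
  rwa [smul_eq_mul, mul_comm, ← smul_eq_mul] at this

lemma AG_span_mul_ne_bot {a : R} {K : Ideal R} (ha : a ∉ Submodule.annihilator K) :
    Ideal.span {a} * K ≠ ⊥ := by
  intro h
  apply ha
  rw [Submodule.mem_annihilator]
  intro n hn
  have : a * n ∈ Ideal.span {a} * K :=
    Ideal.mul_mem_mul (Ideal.mem_span_singleton_self a) hn
  rw [h, Ideal.mem_bot] at this
  rwa [smul_eq_mul]

/-- Key lemma: if `AG(R)` is 2-colorable and `K` is a nonzero ideal with nonzero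
annihilator, then `Ann(K)` is prime (otherwise a triangle appears). -/
lemma AG_ann_isPrime [IsReduced R] (hcol : (annihilatingIdealGraph R).Colorable 2)
    {K : Ideal R} (hK : K ≠ ⊥) (hA : Submodule.annihilator K ≠ ⊥) :
    (Submodule.annihilator K).IsPrime := by
  constructor
  · intro htop
    apply hK
    rw [eq_bot_iff]
    intro x hx
    have h1 : (1 : R) ∈ Submodule.annihilator K := by rw [htop]; trivial
    have := Submodule.mem_annihilator.mp h1 x hx
    rw [smul_eq_mul, one_mul] at this
    rwa [Ideal.mem_bot]
  · intro a b hab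
    by_contra hcon
    push_neg at hcon
    obtain ⟨ha, hb⟩ := hcon
    set A := Submodule.annihilator K with hAdef
    set Ia := Ideal.span {a} * K with hIadef
    set Ib := Ideal.span {b} * K with hIbdef
    have hIa : Ia ≠ ⊥ := AG_span_mul_ne_bot ha
    have hIb : Ib ≠ ⊥ := AG_span_mul_ne_bot hb
    have hIaK : Ia ≤ K := Ideal.mul_le_right
    have hIbK : Ib ≤ K := Ideal.mul_le_right
    -- products
    have hAIa : A * Ia = ⊥ := by
      rw [eq_bot_iff]
      calc A * Ia ≤ A * K := Ideal.mul_mono_right hIaK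
        _ = ⊥ := AG_ann_mul_bot K
    have hAIb : A * Ib = ⊥ := by
      rw [eq_bot_iff]
      calc A * Ib ≤ A * K := Ideal.mul_mono_right hIbK
        _ = ⊥ := AG_ann_mul_bot K
    have hIaIb : Ia * Ib = ⊥ := by
      have h1 : Ia * Ib = Ideal.span {a * b} * (K * K) := by
        rw [hIadef, hIbdef, ← Ideal.span_singleton_mul_span_singleton]
        ring
      have h2 : Ideal.span {a * b} * K = ⊥ := by
        rw [eq_bot_iff, Ideal.mul_le]
        intro r hr s hs
        rw [Ideal.mem_span_singleton] at hr
        obtain ⟨c, rfl⟩ := hr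
        have := Submodule.mem_annihilator.mp hab s hs
        rw [smul_eq_mul] at this
        rw [Ideal.mem_bot]
        rw [mul_comm (a*b) c, mul_assoc, this, mul_zero]
      rw [h1, ← mul_assoc, h2, Ideal.bot_mul]
    -- distinctness
    have hAneIa : A ≠ Ia := by
      intro h
      rw [← h] at hAIa
      exact hA (AG_sq_eq_bot hAIa)
    have hAneIb : A ≠ Ib := by
      intro h
      rw [← h] at hAIb
      exact hA (AG_sq_eq_bot hAIb)
    have hIaneIb : Ia ≠ Ib := by
      intro h
      apply hIa
      apply AG_sq_eq_bot
      rwa [← h] at hIaIb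
    -- vertices
    have hannA : Submodule.annihilator A ≠ ⊥ := fun h => hK (eq_bot_iff.mpr (h ▸ AG_self_le_ann_ann K))
    have hannIa : Submodule.annihilator Ia ≠ ⊥ := by
      intro h
      exact hA (eq_bot_iff.mpr (h ▸ AG_le_ann hAIa))
    have hannIb : Submodule.annihilator Ib ≠ ⊥ := by
      intro h
      exact hA (eq_bot_iff.mpr (h ▸ AG_le_ann hAIb))
    let v0 : {I : Ideal R // I ≠ ⊥ ∧ Submodule.annihilator I ≠ ⊥} := ⟨A, hA, hannA⟩
    let v1 : {I : Ideal R // I ≠ ⊥ ∧ Submodule.annihilator I ≠ ⊥} := ⟨Ia, hIa, hannIa⟩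
    let v2 : {I : Ideal R // I ≠ ⊥ ∧ Submodule.annihilator I ≠ ⊥} := ⟨Ib, hIb, hannIb⟩
    have adj01 : (annihilatingIdealGraph R).Adj v0 v1 :=
      ⟨fun h => hAneIa (congrArg Subtype.val h), hAIa⟩
    have adj02 : (annihilatingIdealGraph R).Adj v0 v2 :=
      ⟨fun h => hAneIb (congrArg Subtype.val h), hAIb⟩
    have adj12 : (annihilatingIdealGraph R).Adj v1 v2 :=
      ⟨fun h => hIaneIb (congrArg Subtype.val h), hIaIb⟩
    obtain ⟨C⟩ := hcol
    have h01 := C.valid adj01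
    have h02 := C.valid adj02
    have h12 := C.valid adj12
    have e01 : (C v0).val ≠ (C v1).val := fun h => h01 (Fin.val_injective h)
    have e02 : (C v0).val ≠ (C v2).val := fun h => h02 (Fin.val_injective h)
    have e12 : (C v1).val ≠ (C v2).val := fun h => h12 (Fin.val_injective h)
    have l0 := (C v0).isLt
    have l1 := (C v1).isLt
    have l2 := (C v2).isLt
    omega

end Aux

/-- If `R` is reduced and `AG(R)` is bipartite (2-colorable with at least one edge),
then `R` has two distinct prime ideals `P₁`, `P₂` with `P₁ ∩ P₂ = 0`. -/
theorem reduced_bipartite_two_primes {R : Type*} [CommRing R] [IsReduced R]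
    (hcol : (annihilatingIdealGraph R).Colorable 2)
    (hedge : ∃ I J, (annihilatingIdealGraph R).Adj I J) :
    ∃ P₁ P₂ : Ideal R, P₁.IsPrime ∧ P₂.IsPrime ∧ P₁ ≠ P₂ ∧ P₁ ⊓ P₂ = ⊥ := by
  obtain ⟨I, J, hne, hmul⟩ := hedge
  obtain ⟨hJ, hJann⟩ := J.2
  set P₁ := Submodule.annihilator J.1 with hP1
  set P₂ := Submodule.annihilator P₁ with hP2
  have hP1ne : P₁ ≠ ⊥ := hJann
  have hP2ne : P₂ ≠ ⊥ := fun h =>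
    hJ (eq_bot_iff.mpr ((AG_self_le_ann_ann J.1).trans (le_of_eq h)))
  refine ⟨P₁, P₂, AG_ann_isPrime hcol hJ hJann, AG_ann_isPrime hcol hP1ne hP2ne, ?_, ?_⟩
  · intro h
    have hb2 : P₂ * P₁ = ⊥ := AG_ann_mul_bot P₁
    rw [← h] at hb2
    exact hP1ne (AG_sq_eq_bot hb2)
  · rw [eq_bot_iff]
    intro x ⟨hx1, hx2⟩
    have := Submodule.mem_annihilator.mp hx2 x hx1
    rw [smul_eq_mul] at this
    rw [Ideal.mem_bot]
    exact IsNilpotent.eq_zero ⟨2, by rwa [pow_two]⟩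
end

section
/- Let R be a commutative ring having two distinct prime ideals P1 and P2 with P1 ∩ P2 = (0). Then every nonzero annihilating-ideal of R is contained in P1 or in P2, any two nonzero annihilating-ideals contained in the same Pi have nonzero product, and any two with I ⊆ P1, J ⊆ P2 satisfy IJ = (0). In particular AG(R) is a complete bipartite graph. -/
/-- If `R` has two distinct primes `P₁`, `P₂` with `P₁ ∩ P₂ = 0`, then every nonzero
annihilating-ideal lies in `P₁` or `P₂`, two such ideals inside the same `Pᵢ` have
nonzero product, and any two on opposite sides have product zero (so `AG(R)` is a
complete bipartite graph). -/
theorem AG_complete_bipartite_of_two_primes {R : Type*} [CommRing R]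
    (P₁ P₂ : Ideal R) (hP₁ : P₁.IsPrime) (hP₂ : P₂.IsPrime) (hne : P₁ ≠ P₂)
    (hint : P₁ ⊓ P₂ = ⊥) :
    (∀ I : Ideal R, I ≠ ⊥ → Submodule.annihilator I ≠ ⊥ → I ≤ P₁ ∨ I ≤ P₂) ∧
    (∀ I J : Ideal R, I ≠ ⊥ → J ≠ ⊥ → Submodule.annihilator I ≠ ⊥ →
      Submodule.annihilator J ≠ ⊥ → I ≠ J →
      ((I ≤ P₁ → J ≤ P₁ → I * J ≠ ⊥) ∧ (I ≤ P₂ → J ≤ P₂ → I * J ≠ ⊥) ∧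
        (I ≤ P₁ → J ≤ P₂ → I * J = ⊥))) := by
  constructor
  · intro I _ hann
    obtain ⟨a, haI, ha0⟩ := Submodule.exists_mem_ne_zero_of_ne_bot hann
    have hmul : ∀ x ∈ I, a * x = 0 := by
      intro x hx
      simpa [smul_eq_mul] using (Submodule.mem_annihilator.mp haI x hx)
    have hcase : a ∉ P₁ ∨ a ∉ P₂ := by
      by_contra h
      push_neg at h
      have : a ∈ P₁ ⊓ P₂ := ⟨h.1, h.2⟩
      rw [hint] at this
      exact ha0 this
    rcases hcase with h | h
    · left
      intro x hx
      rcases hP₁.mem_or_mem (show a * x ∈ P₁ by rw [hmul x hx]; exact P₁.zero_mem) with h' | h'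
      · exact absurd h' h
      · exact h'
    · right
      intro x hx
      rcases hP₂.mem_or_mem (show a * x ∈ P₂ by rw [hmul x hx]; exact P₂.zero_mem) with h' | h'
      · exact absurd h' h
      · exact h'
  · intro I J hI hJ _ _ _
    refine ⟨?_, ?_, ?_⟩
    · intro h1 h2 h0
      have : I * J ≤ P₂ := h0 ▸ bot_le
      rcases (Ideal.IsPrime.mul_le hP₂).mp this with h' | h'
      · exact hI (le_bot_iff.mp (hint ▸ le_inf h1 h'))
      · exact hJ (le_bot_iff.mp (hint ▸ le_inf h2 h'))
    · intro h1 h2 h0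
      have : I * J ≤ P₁ := h0 ▸ bot_le
      rcases (Ideal.IsPrime.mul_le hP₁).mp this with h' | h'
      · exact hI (le_bot_iff.mp (hint ▸ le_inf h' h1))
      · exact hJ (le_bot_iff.mp (hint ▸ le_inf h' h2))
    · intro h1 h2
      exact le_bot_iff.mp (hint ▸ (Ideal.mul_le_inf.trans (inf_le_inf h1 h2)))
end

section
/- Let R be a commutative ring. If the annihilating-ideal graph AG(R) contains an infinite clique (an infinite family of pairwise distinct nonzero ideals with pairwise product zero), then the zero-divisor graph Γ(R) contains an infinite clique (an infinite set of pairwise distinct nonzero elements with pairwise product zero). -/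
open scoped Classical

/-- Key step: from an infinite family of ideals, we can pick an ideal avoiding a
finite set of ideals and an element of it avoiding a finite set of elements. -/
lemma AG_step {R : Type*} [CommRing R] (S : Set (Ideal R)) (hS : S.Infinite)
    (P : Finset (Ideal R)) (F : Finset R) :
    ∃ p : Ideal R × R, p.1 ∈ S ∧ p.1 ∉ P ∧ p.2 ∈ p.1 ∧ p.2 ≠ 0 ∧ p.2 ∉ F := by
  have h1 : ((↑F ∪ {0} : Set R)).Finite := F.finite_toSet.union (Set.finite_singleton 0)
  have h2 : {t : Set R | t ⊆ (↑F ∪ {0} : Set R)}.Finite := Set.Finite.finite_subsets h1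
  have h3 : {I : Ideal R | (I : Set R) ⊆ (↑F ∪ {0} : Set R)}.Finite :=
    h2.preimage (Set.injOn_of_injective SetLike.coe_injective)
  have hinf : (S \ (↑P ∪ {I : Ideal R | (I : Set R) ⊆ (↑F ∪ {0} : Set R)})).Infinite :=
    hS.diff (P.finite_toSet.union h3)
  obtain ⟨I, hIS, hInot⟩ := hinf.nonempty
  rw [Set.mem_union] at hInot
  push_neg at hInot
  obtain ⟨hIP, hIsub⟩ := hInot
  rw [Set.mem_setOf_eq, Set.not_subset] at hIsub
  obtain ⟨a, haI, hanot⟩ := hIsub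
  rw [Set.mem_union] at hanot
  push_neg at hanot
  exact ⟨(I, a), hIS, hIP, haI, by simpa using hanot.2, by simpa using hanot.1⟩

noncomputable def AG_seq {R : Type*} [CommRing R] (S : Set (Ideal R)) (hS : S.Infinite) :
    ℕ → Ideal R × R
  | n =>
    (AG_step S hS
      (((Finset.range n).attach).image fun m =>
        (AG_seq S hS m.1).1)
      (((Finset.range n).attach).image fun m =>
        (AG_seq S hS m.1).2)).choose
  decreasing_by all_goals exact Finset.mem_range.mp m.2

lemma AG_seq_spec {R : Type*} [CommRing R] (S : Set (Ideal R)) (hS : S.Infinite) (n : ℕ) :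
    (AG_seq S hS n).1 ∈ S ∧
    (∀ m < n, (AG_seq S hS n).1 ≠ (AG_seq S hS m).1) ∧
    (AG_seq S hS n).2 ∈ (AG_seq S hS n).1 ∧
    (AG_seq S hS n).2 ≠ 0 ∧
    (∀ m < n, (AG_seq S hS n).2 ≠ (AG_seq S hS m).2) := by
  rw [AG_seq]
  obtain ⟨h1, h2, h3, h4, h5⟩ := (AG_step S hS
      (((Finset.range n).attach).image fun m => (AG_seq S hS m.1).1)
      (((Finset.range n).attach).image fun m => (AG_seq S hS m.1).2)).choose_spec
  refine ⟨h1, ?_, h3, h4, ?_⟩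
  · intro m hm heq
    exact h2 (Finset.mem_image.mpr ⟨⟨m, Finset.mem_range.mpr hm⟩, Finset.mem_attach _ _, heq.symm⟩)
  · intro m hm heq
    exact h5 (Finset.mem_image.mpr ⟨⟨m, Finset.mem_range.mpr hm⟩, Finset.mem_attach _ _, heq.symm⟩)

/-- If the annihilating-ideal graph of `R` contains an infinite clique, then the
zero-divisor graph of `R` contains an infinite clique. -/
theorem Gamma_infinite_clique_of_AG_infinite_clique {R : Type*} [CommRing R]
    (h : ∃ S : Set (Ideal R), S.Infinite ∧ (∀ I ∈ S, I ≠ ⊥) ∧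
      ∀ I ∈ S, ∀ J ∈ S, I ≠ J → I * J = ⊥) :
    ∃ T : Set R, T.Infinite ∧ (∀ x ∈ T, x ≠ 0) ∧
      ∀ x ∈ T, ∀ y ∈ T, x ≠ y → x * y = 0 := by
  obtain ⟨S, hS, hbot, hmul⟩ := h
  set f := AG_seq S hS with hf
  have spec := AG_seq_spec S hS
  have hInj : Function.Injective fun n => (f n).1 := by
    intro m n hmn
    by_contra hne
    rcases Nat.lt_or_ge m n with hlt | hge
    · exact (spec n).2.1 m hlt hmn.symm
    · exact (spec m).2.1 n (lt_of_le_of_ne hge (Ne.symm hne)) hmn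
  have haInj : Function.Injective fun n => (f n).2 := by
    intro m n hmn
    by_contra hne
    rcases Nat.lt_or_ge m n with hlt | hge
    · exact (spec n).2.2.2.2 m hlt hmn.symm
    · exact (spec m).2.2.2.2 n (lt_of_le_of_ne hge (Ne.symm hne)) hmn
  refine ⟨Set.range fun n => (f n).2, Set.infinite_range_of_injective haInj, ?_, ?_⟩
  · rintro x ⟨n, rfl⟩
    exact (spec n).2.2.2.1
  · rintro x ⟨m, rfl⟩ y ⟨n, rfl⟩ hxy
    have hmn : m ≠ n := fun e => hxy (by rw [e])
    have hIJ : (f m).1 ≠ (f n).1 := fun e => hmn (hInj e)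
    have : (f m).2 * (f n).2 ∈ (f m).1 * (f n).1 :=
      Ideal.mul_mem_mul (spec m).2.2.1 (spec n).2.2.1
    rw [hmul _ (spec m).1 _ (spec n).1 hIJ] at this
    exact Ideal.mem_bot.mp this
end

section
/- Let R be a commutative reduced ring whose annihilating-ideal graph has no infinite clique. Then R has finitely many minimal prime ideals; equivalently, (0) is a finite intersection of prime ideals of R. -/
namespace NoInfClique

variable {R : Type*} [CommRing R]

/-- annihilator of an element as an ideal -/
def annId (a : R) : Ideal R where
  carrier := {x | x * a = 0}
  zero_mem' := by simp
  add_mem' := by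
    intro x y hx hy
    simp only [Set.mem_setOf_eq] at *
    rw [add_mul, hx, hy, add_zero]
  smul_mem' := by
    intro c x hx
    simp only [Set.mem_setOf_eq, smul_eq_mul] at *
    rw [mul_assoc, hx, mul_zero]

lemma mem_annId {a x : R} : x ∈ annId a ↔ x * a = 0 := Iff.rfl

variable [IsReduced R]

lemma exists_ann_not_mem {P : Ideal R} (hP : P ∈ minimalPrimes R) {a : R} (ha : a ∈ P) :
    ∃ x, x ∉ P ∧ x * a = 0 := by
  have hPp : P.IsPrime := hP.1.1
  set S : Submonoid R :=
    { carrier := {r | ∃ x, x ∉ P ∧ ∃ n : ℕ, r = x * a ^ n}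
      one_mem' := ⟨1, fun h1 => hPp.ne_top ((Ideal.eq_top_iff_one P).2 h1), 0, by ring⟩
      mul_mem' := by
        rintro r s ⟨x, hx, n, rfl⟩ ⟨y, hy, m, rfl⟩
        exact ⟨x * y, fun hxy => ((hPp.mem_or_mem hxy).elim hx hy), n + m, by ring⟩ } with hSdef
  by_cases h0 : (0 : R) ∈ S
  · obtain ⟨x, hx, n, hxn⟩ := h0
    refine ⟨x, hx, ?_⟩
    have hnil : (x * a) ^ (n + 1) = 0 := by
      have h1 : x * a ^ n = 0 := hxn.symm
      calc (x * a) ^ (n + 1) = (x * a ^ n) * (x ^ n * a) := by ring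
        _ = 0 := by rw [h1, zero_mul]
    exact IsNilpotent.eq_zero ⟨n + 1, hnil⟩
  · exfalso
    have hdisj : Disjoint ((⊥ : Ideal R) : Set R) (S : Set R) := by
      rw [Set.disjoint_left]
      intro r hr hrS
      rw [SetLike.mem_coe, Ideal.mem_bot] at hr
      exact h0 (hr ▸ hrS)
    obtain ⟨Q, hQp, -, hQS⟩ := Ideal.exists_le_prime_disjoint ⊥ S hdisj
    have hQP : Q ≤ P := by
      intro y hy
      by_contra hyP
      exact (Set.disjoint_left.mp hQS hy) ⟨y, hyP, 0, by ring⟩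
    have hPQ : P ≤ Q := hP.2 ⟨hQp, bot_le⟩ hQP
    exact (Set.disjoint_left.mp hQS (hPQ ha))
      ⟨1, fun h1 => hPp.ne_top ((Ideal.eq_top_iff_one P).2 h1), 1, by ring⟩

lemma step {I : Ideal R} (hI : ({P ∈ minimalPrimes R | ¬ I ≤ P}).Infinite) :
    ∃ C I' : Ideal R, C ≠ ⊥ ∧ C ≤ I ∧ I' ≤ I ∧ C * I' = ⊥ ∧
      ({P ∈ minimalPrimes R | ¬ I' ≤ P}).Infinite := by
  obtain ⟨P, hPm, Q, hQm, hPQ⟩ := hI.nontrivial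
  obtain ⟨hPmem, hIP⟩ := hPm
  obtain ⟨hQmem, hIQ⟩ := hQm
  have hPp : P.IsPrime := hPmem.1.1
  have hQp : Q.IsPrime := hQmem.1.1
  have hQnleP : ¬ Q ≤ P := by
    intro hle
    exact hPQ (le_antisymm (hPmem.2 ⟨hQp, bot_le⟩ hle) hle)
  -- pick a ∈ I * Q, a ∉ P
  have hIQP : ¬ I * Q ≤ P := by
    rw [hPp.mul_le]; tauto
  obtain ⟨a, haIQ, haP⟩ := SetLike.not_le_iff_exists.mp hIQP
  have haI : a ∈ I := Ideal.mul_le_left haIQ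
  have haQ : a ∈ Q := Ideal.mul_le_right haIQ
  have ha0 : a ≠ 0 := fun h => haP (h ▸ P.zero_mem)
  set J1 : Ideal R := Ideal.span {a} with hJ1
  set J2 : Ideal R := I ⊓ annId a with hJ2
  have hJ1I : J1 ≤ I := (Ideal.span_le).2 (Set.singleton_subset_iff.2 haI)
  have hJ1ne : J1 ≠ ⊥ := fun hb => ha0 (Ideal.span_singleton_eq_bot.mp hb)
  have hJ2ne : J2 ≠ ⊥ := by
    obtain ⟨x, hxQ, hxa⟩ := exists_ann_not_mem hQmem haQ
    obtain ⟨b, hbI, hbQ⟩ := SetLike.not_le_iff_exists.mp hIQ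
    rw [Submodule.ne_bot_iff]
    refine ⟨x * b, ⟨I.mul_mem_left x hbI, ?_⟩, ?_⟩
    · show x * b * a = 0
      rw [mul_comm x b, mul_assoc, hxa, mul_zero]
    · intro h
      exact (fun hm => (hQp.mem_or_mem hm).elim hxQ hbQ) (h ▸ Q.zero_mem)
  have hmul : J1 * J2 = ⊥ := by
    rw [eq_bot_iff]
    rw [Ideal.mul_le]
    intro r hr s hs
    obtain ⟨c, rfl⟩ := Ideal.mem_span_singleton'.mp hr
    have hsa : s * a = 0 := hs.2
    rw [Ideal.mem_bot]
    calc c * a * s = c * (s * a) := by ring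
      _ = 0 := by rw [hsa, mul_zero]
  -- the infinite set splits
  have hcover : {P' ∈ minimalPrimes R | ¬ I ≤ P'} ⊆
      {P' ∈ minimalPrimes R | ¬ J1 ≤ P'} ∪ {P' ∈ minimalPrimes R | ¬ J2 ≤ P'} := by
    rintro P' ⟨hP'min, hIP'⟩
    by_cases haP' : a ∈ P'
    · right
      refine ⟨hP'min, ?_⟩
      obtain ⟨x, hxP', hxa⟩ := exists_ann_not_mem hP'min haP'
      obtain ⟨b, hbI, hbP'⟩ := SetLike.not_le_iff_exists.mp hIP'
      intro hle
      have : x * b ∈ J2 := ⟨I.mul_mem_left x hbI, show x * b * a = 0 by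
        rw [mul_comm x b, mul_assoc, hxa, mul_zero]⟩
      exact (hP'min.1.1.mem_or_mem (hle this)).elim hxP' hbP'
    · left
      exact ⟨hP'min, fun hle => haP' (hle (Ideal.subset_span rfl))⟩
  rcases (Set.infinite_union.mp (hI.mono hcover)) with h1 | h2
  · exact ⟨J2, J1, hJ2ne, inf_le_left, hJ1I, by rw [mul_comm]; exact hmul, h1⟩
  · exact ⟨J1, J2, hJ1ne, hJ1I, inf_le_left, hmul, h2⟩

lemma sq_bot {I : Ideal R} (h : I * I = ⊥) : I = ⊥ := by
  rw [eq_bot_iff]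
  intro x hx
  rw [Ideal.mem_bot]
  have : x * x ∈ I * I := Ideal.mul_mem_mul hx hx
  rw [h, Ideal.mem_bot] at this
  exact IsNilpotent.eq_zero ⟨2, by rw [sq]; exact this⟩

end NoInfClique

open NoInfClique in
/-- If `R` is reduced and `AG(R)` has no infinite clique, then `R` has finitely many
minimal primes; equivalently, `(0)` is a finite intersection of primes. -/
theorem finitely_many_minimal_primes_of_no_infinite_clique {R : Type*} [CommRing R]
    [IsReduced R]
    (h : ¬ ∃ S : Set (Ideal R), S.Infinite ∧ (∀ I ∈ S, I ≠ ⊥) ∧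
      ∀ I ∈ S, ∀ J ∈ S, I ≠ J → I * J = ⊥) :
    (minimalPrimes R).Finite ∧
      ∃ s : Finset (Ideal R), (∀ P ∈ s, P.IsPrime) ∧ (⨅ P ∈ s, P) = ⊥ := by
  rcases subsingleton_or_nontrivial R with hss | hnt
  · have hempty : minimalPrimes R = ∅ := by
      ext P
      simp only [Set.mem_empty_iff_false, iff_false]
      intro hP
      exact hP.1.1.ne_top (Subsingleton.elim _ _)
    refine ⟨hempty ▸ Set.finite_empty, ∅, by simp, ?_⟩
    simp only [Finset.notMem_empty]
    exact Subsingleton.elim _ _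
  have hfin : (minimalPrimes R).Finite := by
    by_contra hinf
    replace hinf : (minimalPrimes R).Infinite := hinf
    have key : ∀ I : Ideal R, ({P ∈ minimalPrimes R | ¬ I ≤ P}).Infinite →
        ∃ C I' : Ideal R, C ≠ ⊥ ∧ C ≤ I ∧ I' ≤ I ∧ C * I' = ⊥ ∧
          ({P ∈ minimalPrimes R | ¬ I' ≤ P}).Infinite := fun I hI => step hI
    choose Cf If h1 h2 h3 h4 h5 using key
    have htop : ({P ∈ minimalPrimes R | ¬ (⊤ : Ideal R) ≤ P}).Infinite := by
      have : {P ∈ minimalPrimes R | ¬ (⊤ : Ideal R) ≤ P} = minimalPrimes R := by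
        ext P
        simp only [Set.mem_setOf_eq, top_le_iff, and_iff_left_iff_imp]
        exact fun hP => hP.1.1.ne_top
      rw [this]; exact hinf
    set Good : Ideal R → Prop := fun I => ({P ∈ minimalPrimes R | ¬ I ≤ P}).Infinite with hGood
    let seq : ℕ → {I : Ideal R // Good I} := fun n =>
      Nat.rec ⟨⊤, htop⟩ (fun _ p => ⟨If p.1 p.2, h5 p.1 p.2⟩) n
    set C : ℕ → Ideal R := fun n => Cf (seq n).1 (seq n).2 with hC
    have hseq : ∀ n, (seq (n + 1)).1 = If (seq n).1 (seq n).2 := fun n => rfl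
    have hmono : ∀ m n, m ≤ n → (seq n).1 ≤ (seq m).1 := by
      intro m n hmn
      induction n with
      | zero => rw [Nat.le_zero.mp hmn]
      | succ k ih =>
        rcases Nat.lt_or_ge m (k + 1) with hlt | hge
        · exact le_trans (hseq k ▸ h3 (seq k).1 (seq k).2) (ih (Nat.lt_succ_iff.mp hlt))
        · rw [le_antisymm hmn hge]
    have hCbot : ∀ m n, m < n → C m * C n = ⊥ := by
      intro m n hmn
      rw [eq_bot_iff]
      calc C m * C n ≤ C m * (seq (m + 1)).1 :=
            Ideal.mul_mono_right ((h2 (seq n).1 (seq n).2).trans (hmono (m + 1) n hmn))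
        _ ≤ ⊥ := le_of_eq (by rw [hseq m]; exact h4 (seq m).1 (seq m).2)
    have hCne : ∀ n, C n ≠ ⊥ := fun n => h1 (seq n).1 (seq n).2
    have hinj : Function.Injective C := by
      intro m n hmn
      by_contra hne
      rcases Nat.lt_or_ge m n with hlt | hge
      · exact hCne m (sq_bot (hmn ▸ hCbot m n hlt))
      · exact hCne n (sq_bot (hmn ▸ hCbot n m (lt_of_le_of_ne hge (Ne.symm hne))))
    refine h ⟨Set.range C, Set.infinite_range_of_injective hinj, ?_, ?_⟩
    · rintro I ⟨n, rfl⟩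
      exact hCne n
    · rintro I ⟨m, rfl⟩ J ⟨n, rfl⟩ hne
      have hmn : m ≠ n := fun e => hne (e ▸ rfl)
      rcases Nat.lt_or_ge m n with hlt | hge
      · exact hCbot m n hlt
      · rw [mul_comm]; exact hCbot n m (lt_of_le_of_ne hge (Ne.symm hmn))
  refine ⟨hfin, hfin.toFinset, ?_, ?_⟩
  · intro P hP
    rw [Set.Finite.mem_toFinset] at hP
    exact hP.1.1
  · have : (⨅ P ∈ hfin.toFinset, P) = ⨅ P ∈ minimalPrimes R, P := by
      refine le_antisymm (le_iInf₂ fun P hP => ?_) (le_iInf₂ fun P hP => ?_)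
      · exact iInf₂_le P (hfin.mem_toFinset.mpr hP)
      · exact iInf₂_le P (hfin.mem_toFinset.mp hP)
    rw [this, ← sInf_eq_iInf]
    show sInf (Ideal.minimalPrimes ⊥) = ⊥
    rw [Ideal.sInf_minimalPrimes]
    have : (⊥ : Ideal R).radical = nilradical R := rfl
    rw [this, nilradical_eq_zero]
    rfl
end

section
/- Let R be a commutative reduced ring whose zero ideal is the intersection of k prime ideals P1, ..., Pk. Then the annihilating-ideal graph AG(R) is k-colorable: there is a coloring of the nonzero annihilating-ideals with k colors such that adjacent ideals (i.e., with product zero) receive different colors. -/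
/-- If the zero ideal of a reduced ring `R` is an intersection of `k` primes, then
`AG(R)` is `k`-colorable. -/
theorem AG_colorable_of_zero_eq_inter_primes {R : Type*} [CommRing R] [IsReduced R]
    (k : ℕ) (P : Fin k → Ideal R) (hP : ∀ i, (P i).IsPrime) (hinf : (⨅ i, P i) = ⊥) :
    (annihilatingIdealGraph R).Colorable k := by
  classical
  have hex : ∀ v : {I : Ideal R // I ≠ ⊥ ∧ Submodule.annihilator I ≠ ⊥},
      ∃ i, ¬ (v : Ideal R) ≤ P i := by
    intro v
    by_contra h
    push_neg at h
    have h2 : (v : Ideal R) ≤ ⨅ i, P i := le_iInf h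
    rw [hinf] at h2
    exact v.2.1 (le_bot_iff.mp h2)
  refine ⟨SimpleGraph.Coloring.mk (fun v => (hex v).choose) ?_⟩
  intro a b hab heq
  have ha := (hex a).choose_spec
  have hb := (hex b).choose_spec
  rw [heq] at ha
  have hmul : (a : Ideal R) * (b : Ideal R) ≤ P (hex b).choose := by
    rw [hab.2]; exact bot_le
  rcases ((hP _).mul_le).mp hmul with h | h
  · exact ha h
  · exact hb h
end

section
/- Let R be a commutative reduced ring that is not an integral domain and has exactly n minimal prime ideals (n finite, n ≥ 2). Then the chromatic number of the annihilating-ideal graph equals the clique number of the annihilating-ideal graph equals n. -/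
/-- For a reduced non-domain ring with exactly `n ≥ 2` minimal primes,
`χ(AG(R)) = cl(AG(R)) = n`. -/
theorem AG_chromatic_eq_clique_eq_card_minimalPrimes {R : Type*} [CommRing R]
    [IsReduced R] (hnd : ¬ IsDomain R) (n : ℕ) (hn : 2 ≤ n)
    (hcard : (minimalPrimes R).ncard = n) (hfin : (minimalPrimes R).Finite) :
    (annihilatingIdealGraph R).chromaticNumber = n ∧
      (∃ s : Finset {I : Ideal R // I ≠ ⊥ ∧ Submodule.annihilator I ≠ ⊥},
        (annihilatingIdealGraph R).IsNClique n s) ∧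
      ∀ s : Finset {I : Ideal R // I ≠ ⊥ ∧ Submodule.annihilator I ≠ ⊥},
        (annihilatingIdealGraph R).IsClique ↑s → s.card ≤ n := by
  classical
  set S : Finset (Ideal R) := hfin.toFinset with hSdef
  have hSmem : ∀ p, p ∈ S ↔ p ∈ minimalPrimes R := fun p => hfin.mem_toFinset
  have hScard : S.card = n := by
    rw [← hcard, Set.ncard_eq_toFinset_card _ hfin]
  have hprime : ∀ p ∈ S, p.IsPrime := fun p hp => ((hSmem p).1 hp).1.1
  have hmin : ∀ p ∈ S, ∀ q : Ideal R, q.IsPrime → q ≤ p → p ≤ q := by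
    intro p hp q hq hqp
    exact ((hSmem p).1 hp).2 ⟨hq, bot_le⟩ hqp
  -- intersection of all minimal primes is ⊥
  have hSinf : S.inf id = ⊥ := by
    rw [Finset.inf_id_eq_sInf, hSdef, Set.Finite.coe_toFinset]
    have h1 : sInf (minimalPrimes R) = Ideal.radical ⊥ := Ideal.sInf_minimalPrimes
    have h2 : nilradical R = 0 := nilradical_eq_zero R
    rw [h1]; exact h2
  -- the ideals forming the clique
  set e : Ideal R → Ideal R := fun p => (S.erase p).inf id with hedef
  have he_le : ∀ p, ∀ q ∈ S, q ≠ p → e p ≤ q := by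
    intro p q hq hqp
    exact Finset.inf_le (Finset.mem_erase.2 ⟨hqp, hq⟩)
  have he_not_le : ∀ p ∈ S, ¬ e p ≤ p := by
    intro p hp hle
    obtain ⟨q, hq, hqp⟩ := ((hprime p hp).inf_le').1 hle
    obtain ⟨hqne, hqS⟩ := Finset.mem_erase.1 hq
    exact hqne (le_antisymm hqp (hmin p hp q (hprime q hqS) hqp))
  have he_ne_bot : ∀ p ∈ S, e p ≠ ⊥ := by
    intro p hp h
    exact he_not_le p hp (h ▸ bot_le)
  have he_mul : ∀ p ∈ S, ∀ q ∈ S, p ≠ q → e p * e q = ⊥ := by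
    intro p hp q hq hpq
    have h1 : e p * e q ≤ S.inf id := by
      apply le_trans Ideal.mul_le_inf
      apply Finset.le_inf
      intro r hr
      by_cases hrp : r = p
      · rw [hrp]
        exact inf_le_right.trans (he_le q p hp hpq)
      · exact inf_le_left.trans (he_le p r hr hrp)
    rw [hSinf] at h1
    exact le_bot_iff.1 h1
  have he_ann : ∀ p ∈ S, ∀ q ∈ S, p ≠ q → e q ≤ Submodule.annihilator (e p) := by
    intro p hp q hq hpq x hx
    rw [Submodule.mem_annihilator]
    intro y hy
    have : x * y ∈ e q * e p := Ideal.mul_mem_mul hx hy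
    rw [he_mul q hq p hp (Ne.symm hpq)] at this
    simpa using this
  have he_inj : ∀ p ∈ S, ∀ q ∈ S, e p = e q → p = q := by
    intro p hp q hq heq
    by_contra hpq
    have hmul := he_mul p hp q hq hpq
    rw [← heq] at hmul
    apply he_ne_bot p hp
    ext x
    simp only [Ideal.mem_bot]
    constructor
    · intro hx
      have : x * x ∈ e p * e p := Ideal.mul_mem_mul hx hx
      rw [hmul] at this
      have hx2 : x ^ 2 = 0 := by simpa [pow_two] using this
      exact IsReduced.eq_zero x ⟨2, hx2⟩
    · rintro rfl; exact zero_mem _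
  -- S is nonempty and has ≥ 2 elements
  have hS2 : 2 ≤ S.card := hScard ▸ hn
  -- vertices of the clique
  have hvert : ∀ p ∈ S, e p ≠ ⊥ ∧ Submodule.annihilator (e p) ≠ ⊥ := by
    intro p hp
    refine ⟨he_ne_bot p hp, ?_⟩
    obtain ⟨q, hq, hqp⟩ : ∃ q ∈ S, q ≠ p := by
      have : 1 < S.card := lt_of_lt_of_le one_lt_two hS2
      obtain ⟨a, ha, b, hb, hab⟩ := Finset.one_lt_card.1 this
      by_cases hap : a = p
      · exact ⟨b, hb, fun h => hab (hap ▸ h ▸ rfl)⟩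
      · exact ⟨a, ha, hap⟩
    intro h
    apply he_ne_bot q hq
    have h2 := he_ann p hp q hq (Ne.symm hqp)
    rw [h] at h2
    exact le_bot_iff.1 h2
  set v : {p // p ∈ S} → {I : Ideal R // I ≠ ⊥ ∧ Submodule.annihilator I ≠ ⊥} :=
    fun p => ⟨e p.1, hvert p.1 p.2⟩ with hvdef
  have hv_inj : Function.Injective v := by
    intro a b hab
    have : e a.1 = e b.1 := congrArg Subtype.val hab
    exact Subtype.ext (he_inj a.1 a.2 b.1 b.2 this)
  -- the clique
  have hclique : (annihilatingIdealGraph R).IsNClique n (Finset.univ.image v) := by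
    constructor
    · intro x hx y hy hxy
      simp only [Finset.coe_image, Set.mem_image] at hx hy
      obtain ⟨a, _, rfl⟩ := hx
      obtain ⟨b, _, rfl⟩ := hy
      have hab : a.1 ≠ b.1 := by
        intro h; exact hxy (congrArg v (Subtype.ext h))
      exact ⟨hxy, he_mul a.1 a.2 b.1 b.2 hab⟩
    · rw [Finset.card_image_of_injective _ hv_inj, Finset.card_univ, Fintype.card_coe, hScard]
  -- the coloring
  have hcolor_ex : ∀ I : {I : Ideal R // I ≠ ⊥ ∧ Submodule.annihilator I ≠ ⊥},
      ∃ p ∈ S, ¬ (I : Ideal R) ≤ p := by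
    intro I
    by_contra h
    push_neg at h
    have h2 : (I : Ideal R) ≤ S.inf id := Finset.le_inf h
    rw [hSinf] at h2
    exact I.2.1 (le_bot_iff.1 h2)
  set c : {I : Ideal R // I ≠ ⊥ ∧ Submodule.annihilator I ≠ ⊥} → {p // p ∈ S} :=
    fun I => ⟨(hcolor_ex I).choose, (hcolor_ex I).choose_spec.1⟩ with hcdef
  have hc_nle : ∀ I : {I : Ideal R // I ≠ ⊥ ∧ Submodule.annihilator I ≠ ⊥}, ¬ (I : Ideal R) ≤ (c I).1 := fun I => (hcolor_ex I).choose_spec.2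
  have hC : ∀ {I J}, (annihilatingIdealGraph R).Adj I J → c I ≠ c J := by
    intro I J hIJ hcIJ
    have hp := hprime (c I).1 (c I).2
    have hle : (I : Ideal R) * (J : Ideal R) ≤ (c I).1 := by
      rw [hIJ.2]; exact bot_le
    rcases hp.mul_le.1 hle with h | h
    · exact hc_nle I h
    · rw [hcIJ] at h
      exact hc_nle J h
  set C : (annihilatingIdealGraph R).Coloring {p // p ∈ S} :=
    SimpleGraph.Coloring.mk c hC with hCdef
  have hcardS : Fintype.card {p // p ∈ S} = n := by
    rw [Fintype.card_coe, hScard]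
  have hle : (annihilatingIdealGraph R).chromaticNumber ≤ n := by
    have := C.colorable.chromaticNumber_le
    have hcc : Fintype.card {p // p ∈ S} = n := hcardS
    rwa [hcardS] at this
  have hge : (n : ℕ∞) ≤ (annihilatingIdealGraph R).chromaticNumber := by
    have := hclique.1.card_le_chromaticNumber
    rwa [hclique.2] at this
  refine ⟨le_antisymm hle hge, ⟨_, hclique⟩, ?_⟩
  intro s hs
  have := hs.card_le_of_coloring C
  rwa [hcardS] at this
end
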